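/- Let m > 0 and define H(u) for u > 1/(m+1) by H(u) = (u - 1/(m+1))^{-1/2} · ( F(√(u - 1/(m+1))) - (u + 1 - 1/(m+1))^{m/2+1}/(u(m+1)) ), where F(x) = 1 - x·∫₀ˣ ((y²+1)^{m/2}-1)/y² dy. Then H'(u) = -m(1 + u - 1/(m+1))^{m/2}·√(u - 1/(m+1)) / ((m+1)u²), so H is strictly decreasing on (1/(m+1), ∞). -/

import Mathlib

open Real

noncomputable def hgF (m : ℝ) (x : ℝ) : ℝ :=
  1 - x * ∫ y in (0:ℝ)..x, ((y ^ 2 + 1) ^ (m / 2) - 1) / y ^ 2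

noncomputable def gext (m : ℝ) (y : ℝ) : ℝ :=
  if y = 0 then m / 2 else ((y ^ 2 + 1) ^ (m / 2) - 1) / y ^ 2

lemma gext_continuous (m : ℝ) : Continuous (gext m) := by
  rw [continuous_iff_continuousAt]
  intro y
  rcases eq_or_ne y 0 with hy | hy
  · subst hy
    have hD : HasDerivAt (fun t : ℝ => (1 + t) ^ (m / 2)) (m / 2) 0 := by
      have h1 : HasDerivAt (fun t : ℝ => 1 + t) 1 0 := by
        simpa using (hasDerivAt_id (0:ℝ)).const_add 1
      have h2 := h1.rpow_const (p := m/2) (by norm_num)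
      simpa using h2
    have hslope := hasDerivAt_iff_tendsto_slope.mp hD
    have hsq : Filter.Tendsto (fun y : ℝ => y ^ 2) (nhdsWithin 0 {(0:ℝ)}ᶜ)
        (nhdsWithin 0 {(0:ℝ)}ᶜ) := by
      apply tendsto_nhdsWithin_of_tendsto_nhds_of_eventually_within
      · exact Filter.Tendsto.mono_left (by simpa using (continuous_pow 2).tendsto (0:ℝ))
          nhdsWithin_le_nhds
      · filter_upwards [self_mem_nhdsWithin] with y hy
        simpa using pow_ne_zero 2 hy
    have key : Filter.Tendsto (gext m) (nhdsWithin 0 {(0:ℝ)}ᶜ) (nhds (m / 2)) := by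
      have h := hslope.comp hsq
      refine h.congr' ?_
      filter_upwards [self_mem_nhdsWithin] with y hy
      have hy' : y ≠ 0 := by simpa using hy
      simp only [Function.comp, slope_def_field, gext, hy', if_false]
      norm_num [Real.one_rpow, add_comm]
    rw [ContinuousAt, ← nhdsNE_sup_pure (0:ℝ), Filter.tendsto_sup]
    constructor
    · simpa [gext] using key
    · have := tendsto_pure_nhds (gext m) 0
      simpa [gext] using this
  · have hform : ContinuousAt (fun y : ℝ => ((y ^ 2 + 1) ^ (m / 2) - 1) / y ^ 2) y := by
      have h1 : ContinuousAt (fun y : ℝ => (y ^ 2 + 1) ^ (m / 2)) y := by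
        apply ContinuousAt.rpow_const
        · fun_prop
        · left; positivity
      exact (h1.sub continuousAt_const).div (by fun_prop) (pow_ne_zero 2 hy)
    apply hform.congr
    filter_upwards [isOpen_ne.mem_nhds hy] with z hz
    simp [gext, hz]

lemma integral_gext (m x : ℝ) :
    (∫ y in (0:ℝ)..x, ((y ^ 2 + 1) ^ (m / 2) - 1) / y ^ 2)
      = ∫ y in (0:ℝ)..x, gext m y := by
  apply intervalIntegral.integral_congr_ae
  have h0 : ∀ᵐ y : ℝ, y ≠ 0 := by
    rw [MeasureTheory.ae_iff]
    simpa using MeasureTheory.measure_singleton (0:ℝ)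
  filter_upwards [h0] with y hy _
  simp [gext, hy]

lemma hgF_div_hasDerivAt (m x : ℝ) (hx : 0 < x) :
    HasDerivAt (fun t => hgF m t / t) (-(1 + x ^ 2) ^ (m / 2) / x ^ 2) x := by
  have hJ : HasDerivAt (fun t => ∫ y in (0:ℝ)..t, gext m y) (gext m x) x :=
    intervalIntegral.integral_hasDerivAt_right
      ((gext_continuous m).intervalIntegrable _ _)
      ((gext_continuous m).stronglyMeasurableAtFilter _ _)
      (gext_continuous m).continuousAt
  have hinv : HasDerivAt (fun t : ℝ => t⁻¹) (-(x ^ 2)⁻¹) x := hasDerivAt_inv hx.ne'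
  have h := hinv.sub hJ
  have heq : (fun t => hgF m t / t)
      = fun t => t⁻¹ - ∫ y in (0:ℝ)..t, gext m y := by
    funext t
    rcases eq_or_ne t 0 with ht | ht
    · simp [ht, hgF]
    · rw [hgF, integral_gext]
      field_simp
  rw [heq]
  refine h.congr_deriv ?_
  have hx' : x ≠ 0 := hx.ne'
  rw [show gext m x = ((x ^ 2 + 1) ^ (m / 2) - 1) / x ^ 2 from by simp [gext, hx']]
  field_simp
  rw [add_comm (1:ℝ) (x ^ 2)]
  ring

/-- The function `H` from the parity lemma. -/
noncomputable def Hfun (m : ℝ) (u : ℝ) : ℝ :=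
  (hgF m (Real.sqrt (u - 1 / (m + 1)))
      - (u + 1 - 1 / (m + 1)) ^ (m / 2 + 1) / (u * (m + 1)))
    / Real.sqrt (u - 1 / (m + 1))

lemma Hfun_hasDerivAt (m : ℝ) (hm : 0 < m) (u : ℝ) (hu : 1 / (m + 1) < u) :
    HasDerivAt (Hfun m)
      (-(m * (1 + u - 1 / (m + 1)) ^ (m / 2) * Real.sqrt (u - 1 / (m + 1)))
        / ((m + 1) * u ^ 2)) u := by
  have hm1 : (0:ℝ) < m + 1 := by linarith
  set c := 1 / (m + 1) with hc
  have hc0 : 0 < c := by positivity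
  have hu0 : 0 < u := lt_trans hc0 hu
  have huc : 0 < u - c := by linarith
  set x := Real.sqrt (u - c) with hxdef
  have hx : 0 < x := Real.sqrt_pos.mpr huc
  have hx2 : x ^ 2 = u - c := Real.sq_sqrt huc.le
  have hs : HasDerivAt (fun v => Real.sqrt (v - c)) (1 / (2 * x)) u := by
    have h1 : HasDerivAt (fun v : ℝ => v - c) 1 u := (hasDerivAt_id u).sub_const c
    have h2 := (Real.hasDerivAt_sqrt huc.ne').comp u h1
    simpa [Function.comp_def, ← hxdef] using h2
  have hp1 : HasDerivAt (fun v => hgF m (Real.sqrt (v - c)) / Real.sqrt (v - c))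
      (-(1 + x ^ 2) ^ (m / 2) / x ^ 2 * (1 / (2 * x))) u := by
    have h := (hgF_div_hasDerivAt m x hx).comp u hs
    simpa [Function.comp_def] using h
  have hbase : (0:ℝ) < u + 1 - c := by linarith
  have hN : HasDerivAt (fun v => (v + 1 - c) ^ (m / 2 + 1))
      ((m / 2 + 1) * (u + 1 - c) ^ (m / 2) * 1) u := by
    have h1 : HasDerivAt (fun v : ℝ => v + 1 - c) 1 u := by
      simpa using ((hasDerivAt_id u).add_const 1).sub_const c
    have h2 := h1.rpow_const (p := m / 2 + 1) (Or.inl hbase.ne')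
    have : m / 2 + 1 - 1 = m / 2 := by ring
    simpa [this] using h2
  have hD : HasDerivAt (fun v => v * (m + 1) * Real.sqrt (v - c))
      ((m + 1) * x + u * (m + 1) * (1 / (2 * x))) u := by
    have h1 : HasDerivAt (fun v : ℝ => v * (m + 1)) (m + 1) u := by
      simpa using (hasDerivAt_id u).mul_const (m + 1)
    have h := h1.mul hs
    simpa [hxdef, Pi.mul_def] using h
  have hDne : u * (m + 1) * x ≠ 0 := by positivity
  have hp2 := hN.div hD hDne
  have htot := hp1.sub hp2
  have hEq : Hfun m =ᶠ[nhds u]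
      fun v => hgF m (Real.sqrt (v - c)) / Real.sqrt (v - c)
        - (v + 1 - c) ^ (m / 2 + 1) / (v * (m + 1) * Real.sqrt (v - c)) := by
    filter_upwards [isOpen_Ioi.mem_nhds hu] with v hv
    have hv0 : (0:ℝ) < v := lt_trans hc0 hv
    have hsv : 0 < Real.sqrt (v - c) := Real.sqrt_pos.mpr (by simpa using sub_pos.mpr (Set.mem_Ioi.mp hv))
    unfold Hfun
    rw [← hc]
    field_simp
  have hH := htot.congr_of_eventuallyEq hEq
  refine hH.congr_deriv ?_
  have hPpos : (0:ℝ) < 1 + x ^ 2 := by positivity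
  have huc1 : u + 1 - c = 1 + x ^ 2 := by rw [hx2]; ring
  have huc2 : 1 + u - c = 1 + x ^ 2 := by rw [hx2]; ring
  rw [huc1, huc2, Real.rpow_add_one hPpos.ne' (m / 2)]
  set P := (1 + x ^ 2) ^ (m / 2) with hP
  have hueq : u = x ^ 2 + c := by linarith [hx2]
  rw [← hxdef, hueq, hc]
  have hne : x ^ 2 + 1 / (m + 1) ≠ 0 := by positivity
  field_simp
  ring

/-- For `m > 0`, `H'(u) = -m(1+u-1/(m+1))^{m/2}√(u-1/(m+1)) / ((m+1)u²)`, so `H` is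
strictly decreasing on `(1/(m+1), ∞)`. -/
theorem Hfun_deriv_and_strictAnti (m : ℝ) (hm : 0 < m) :
    (∀ u > 1 / (m + 1),
        deriv (Hfun m) u
          = -(m * (1 + u - 1 / (m + 1)) ^ (m / 2) * Real.sqrt (u - 1 / (m + 1)))
              / ((m + 1) * u ^ 2)) ∧
      StrictAntiOn (Hfun m) (Set.Ioi (1 / (m + 1))) := by
  have hm1 : (0:ℝ) < m + 1 := by linarith
  have hd : ∀ u > 1 / (m + 1), deriv (Hfun m) u
      = -(m * (1 + u - 1 / (m + 1)) ^ (m / 2) * Real.sqrt (u - 1 / (m + 1)))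
          / ((m + 1) * u ^ 2) := fun u hu => (Hfun_hasDerivAt m hm u hu).deriv
  refine ⟨hd, ?_⟩
  apply strictAntiOn_of_deriv_neg (convex_Ioi _)
  · intro u hu
    exact ((Hfun_hasDerivAt m hm u hu).differentiableAt).continuousAt.continuousWithinAt
  · intro u hu
    rw [interior_Ioi] at hu
    rw [Set.mem_Ioi] at hu
    rw [hd u hu]
    have hc0 : (0:ℝ) < 1 / (m + 1) := by positivity
    have hu0 : 0 < u := lt_trans hc0 hu
    have hx : 0 < Real.sqrt (u - 1 / (m + 1)) := Real.sqrt_pos.mpr (by linarith)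
    have hP : 0 < (1 + u - 1 / (m + 1)) ^ (m / 2) :=
      Real.rpow_pos_of_pos (by linarith) _
    apply div_neg_of_neg_of_pos
    · have := mul_pos (mul_pos hm hP) hx
      linarith
    · positivity
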